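/- Let n ≥ 1 and p ∈ ℝⁿ, set w = √(1+|p|²), and let γ be the symmetric n×n matrix γ = I − p pᵀ/(w(1+w)). Then γ (I + p pᵀ) γ = I, i.e. γ is the inverse square root of I + p pᵀ. Consequently, for a domain Ω ⊂ ℝⁿ and u ∈ C²(Ω) with u > 0, at each x ∈ Ω the matrix A[u](x) is positive definite if and only if the matrix I + Du Duᵀ + u D²u — which equals one half the Hessian of the function x ↦ u(x)² + |x|² — is positive definite; that is, the graph of u is locally strictly convex in ℍⁿ⁺¹ exactly when u² + |x|² is strictly convex. -/

import Mathlib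

open scoped Topology NNReal
open Filter Set

noncomputable section

/-- Euclidean `n`-space. -/
abbrev En (n : ℕ) := EuclideanSpace ℝ (Fin n)

/-- The positive cone `K⁺ₙ`. -/
def posCone (n : ℕ) : Set (Fin n → ℝ) := {l | ∀ i, 0 < l i}

/-- A curvature function on the positive cone. -/
structure IsCurvatureFunction (n : ℕ) (f : (Fin n → ℝ) → ℝ) : Prop where
  smooth : ContDiffOn ℝ (⊤ : ℕ∞) f (posCone n)
  symm : ∀ (g : Equiv.Perm (Fin n)) (l : Fin n → ℝ), f (l ∘ g) = f l
  pos : ∀ l ∈ posCone n, 0 < f l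
  zero_at_boundary : ∀ l₀ ∈ frontier (posCone n), Tendsto f (𝓝[posCone n] l₀) (𝓝 0)
  deriv_pos : ∀ l ∈ posCone n, ∀ i : Fin n, 0 < fderiv ℝ f l (Pi.single i 1)
  concave : ConcaveOn ℝ (posCone n) f
  normalized : f (fun _ => 1) = 1
  homog : ∀ t : ℝ, 0 ≤ t → ∀ l ∈ posCone n, f (t • l) = t * f l

variable {n : ℕ}

/-- Gradient `Du` (components). -/
def Dg (u : En n → ℝ) (x : En n) : Fin n → ℝ :=
  fun i => fderiv ℝ u x (EuclideanSpace.single i 1)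

/-- Hessian matrix `D²u`. -/
def Dh (u : En n → ℝ) (x : En n) : Matrix (Fin n) (Fin n) ℝ :=
  Matrix.of fun i j =>
    fderiv ℝ (fun y => fderiv ℝ u y (EuclideanSpace.single j 1)) x (EuclideanSpace.single i 1)

/-- `w = √(1+|Du|²)`. -/
def wG (u : En n → ℝ) (x : En n) : ℝ := Real.sqrt (1 + ∑ i, Dg u x i ^ 2)

/-- The matrix `γ = (γ^{ij})`, the inverse square root of `I + Du Duᵀ`. -/
def gammaM (u : En n → ℝ) (x : En n) : Matrix (Fin n) (Fin n) ℝ :=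
  1 - (wG u x * (1 + wG u x))⁻¹ • Matrix.of (fun i j => Dg u x i * Dg u x j)

/-- The matrix `A[u]` whose eigenvalues are the hyperbolic principal curvatures of
the graph of `u`. -/
def hypA (u : En n → ℝ) (x : En n) : Matrix (Fin n) (Fin n) ℝ :=
  (wG u x)⁻¹ • (1 + u x • (gammaM u x * Dh u x * gammaM u x))

open Classical in
/-- Eigenvalues of a (symmetric) real matrix; junk value `0` if not symmetric. -/
def eigenvals {n : ℕ} (A : Matrix (Fin n) (Fin n) ℝ) : Fin n → ℝ :=
  if h : A.IsHermitian then h.eigenvalues else 0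

/-- A solution of the asymptotic Plateau problem `f(κ) = σ` over `Ω`. -/
structure IsAPSolution (n : ℕ) (f : (Fin n → ℝ) → ℝ) (Ω : Set (En n)) (σ : ℝ)
    (u : En n → ℝ) : Prop where
  smooth : ContDiffOn ℝ (⊤ : ℕ∞) u Ω
  cont : ContinuousOn u (closure Ω)
  pos : ∀ x ∈ Ω, 0 < u x
  bd : ∀ x ∈ frontier Ω, u x = 0
  posdef : ∀ x ∈ Ω, (hypA u x).PosDef
  curv_eq : ∀ x ∈ Ω, f (eigenvals (hypA u x)) = σ

section Extras

variable {n : ℕ}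

/-- Uniform exterior ball condition with radius `r`. -/
def UnifExtBall (Ω : Set (En n)) (r : ℝ) : Prop :=
  ∀ p ∈ frontier Ω, ∃ c : En n, Metric.ball c r ∩ Ω = ∅ ∧ dist p c = r

/-- Uniform interior ball condition with radius `r`. -/
def UnifIntBall (Ω : Set (En n)) (r : ℝ) : Prop :=
  ∀ p ∈ frontier Ω, ∃ c : En n, Metric.ball c r ⊆ Ω ∧ dist p c = r

/-- `ν` is the outward unit normal to `∂Ω` at `p`: near `p`, after writing points as
`p + v + tν` with `v` in the tangent hyperplane, `Ω` is the region `t < -φ(v)` for a `C¹`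
function `φ` with `φ(0) = 0`, `Dφ(0) = 0`. -/
def IsOutwardNormalAt (Ω : Set (En n)) (p ν : En n) : Prop :=
  ‖ν‖ = 1 ∧ ∃ r : ℝ, 0 < r ∧ ∃ φ : ↥((Submodule.span ℝ {ν})ᗮ) → ℝ,
    φ 0 = 0 ∧ fderiv ℝ φ 0 = 0 ∧ ContDiffOn ℝ 1 φ (Metric.ball 0 r) ∧
    ∀ y ∈ Metric.ball p r,
      (y ∈ Ω ↔ @inner ℝ _ _ (y - p) ν
          < - φ ((Submodule.orthogonalProjectionOnto ((Submodule.span ℝ {ν})ᗮ)) (y - p)))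

/-- `Ω` has `C¹` boundary. -/
def HasC1Boundary (Ω : Set (En n)) : Prop :=
  ∀ p ∈ frontier Ω, ∃ ν : En n, IsOutwardNormalAt Ω p ν

/-- `Ω` has `C²` boundary: near every boundary point `p`, `Ω` is the region above the graph
of a `C²` function `φ` over the tangent hyperplane, where `ν` is the interior unit normal. -/
def HasC2Boundary (Ω : Set (En n)) : Prop :=
  ∀ p ∈ frontier Ω, ∃ ν : En n, ‖ν‖ = 1 ∧ ∃ r : ℝ, 0 < r ∧
    ∃ φ : ↥((Submodule.span ℝ {ν})ᗮ) → ℝ,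
      φ 0 = 0 ∧ fderiv ℝ φ 0 = 0 ∧ ContDiffOn ℝ 2 φ (Metric.ball 0 r) ∧
      ∀ y ∈ Metric.ball p r,
        (y ∈ Ω ↔ φ ((Submodule.orthogonalProjectionOnto ((Submodule.span ℝ {ν})ᗮ)) (y - p))
            < @inner ℝ _ _ (y - p) ν)

/-- `Ω` has `C^{2,α}` boundary: as `HasC2Boundary`, and additionally the second derivative of
the graph function is Hölder continuous of some exponent `α ∈ (0,1]`. -/
def HasC2alphaBoundary (Ω : Set (En n)) : Prop :=
  ∀ p ∈ frontier Ω, ∃ ν : En n, ‖ν‖ = 1 ∧ ∃ r : ℝ, 0 < r ∧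
    ∃ φ : ↥((Submodule.span ℝ {ν})ᗮ) → ℝ,
      φ 0 = 0 ∧ fderiv ℝ φ 0 = 0 ∧ ContDiffOn ℝ 2 φ (Metric.ball 0 r) ∧
      (∃ α C : ℝ≥0, 0 < α ∧ α ≤ 1 ∧
        @HolderOnWith _ _ _ (@ContinuousLinearMap.toNormedAddCommGroup ℝ ℝ _ _ _ _ _ _ _ _ (RingHom.id ℝ) _).toMetricSpace.toEMetricSpace.toPseudoEMetricSpace C α (fun v => fderiv ℝ (fun z => fderiv ℝ φ z) v) (Metric.ball 0 r)) ∧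
      ∀ y ∈ Metric.ball p r,
        (y ∈ Ω ↔ φ ((Submodule.orthogonalProjectionOnto ((Submodule.span ℝ {ν})ᗮ)) (y - p))
            < @inner ℝ _ _ (y - p) ν)

/-- `Ω` is a mean convex domain with `C^{2,α}` boundary: near every boundary point, `Ω` is the
region above the graph of a `C^{2,α}` function `φ` over the tangent hyperplane (`ν` being the
interior unit normal, `Dφ(0) = 0`), with `Δφ(0) ≥ 0`. -/
def IsMeanConvexC2alphaDomain (Ω : Set (En n)) : Prop :=
  ∀ p ∈ frontier Ω, ∃ ν : En n, ‖ν‖ = 1 ∧ ∃ r : ℝ, 0 < r ∧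
    ∃ φ : ↥((Submodule.span ℝ {ν})ᗮ) → ℝ,
      φ 0 = 0 ∧ fderiv ℝ φ 0 = 0 ∧ ContDiffOn ℝ 2 φ (Metric.ball 0 r) ∧
      (∃ α C : ℝ≥0, 0 < α ∧ α ≤ 1 ∧
        @HolderOnWith _ _ _ (@ContinuousLinearMap.toNormedAddCommGroup ℝ ℝ _ _ _ _ _ _ _ _ (RingHom.id ℝ) _).toMetricSpace.toEMetricSpace.toPseudoEMetricSpace C α (fun v => fderiv ℝ (fun z => fderiv ℝ φ z) v) (Metric.ball 0 r)) ∧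
      (∀ y ∈ Metric.ball p r,
        (y ∈ Ω ↔ φ ((Submodule.orthogonalProjectionOnto ((Submodule.span ℝ {ν})ᗮ)) (y - p))
            < @inner ℝ _ _ (y - p) ν)) ∧
      (∃ b : OrthonormalBasis (Fin (n - 1)) ℝ ↥((Submodule.span ℝ {ν})ᗮ),
        0 ≤ ∑ i, fderiv ℝ (fun z => fderiv ℝ φ z (b i)) 0 (b i))

/-- Gradient with respect to a set (`fderivWithin`), used for derivatives up to the boundary. -/
def DgW (s : Set (En n)) (u : En n → ℝ) (x : En n) : Fin n → ℝ :=
  fun i => fderivWithin ℝ u s x (EuclideanSpace.single i 1)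

end Extras
section DeSitter

variable {n : ℕ}

/-- `w = √(1−|Dv|²)` for a spacelike graph. -/
def wDS (v : En n → ℝ) (x : En n) : ℝ := Real.sqrt (1 - ∑ i, Dg v x i ^ 2)

/-- The matrix `Dv Dvᵀ`. -/
def dyad (v : En n → ℝ) (x : En n) : Matrix (Fin n) (Fin n) ℝ :=
  Matrix.of fun i j => Dg v x i * Dg v x j

/-- Induced (de Sitter) metric of the spacelike graph of `v`. -/
def gDS (v : En n → ℝ) (x : En n) : Matrix (Fin n) (Fin n) ℝ :=
  (v x ^ 2)⁻¹ • (1 - dyad v x)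

/-- Second fundamental form of the spacelike graph of `v`. -/
def hDS (v : En n → ℝ) (x : En n) : Matrix (Fin n) (Fin n) ℝ :=
  (v x ^ 2 * wDS v x)⁻¹ • (1 - dyad v x - v x • Dh v x)

open Classical in
/-- `g^{-1/2} h g^{-1/2}`, whose eigenvalues are the de Sitter principal curvatures
of the spacelike graph of `v` (junk value `0` if `g` is not positive semidefinite). -/
def ADS (v : En n → ℝ) (x : En n) : Matrix (Fin n) (Fin n) ℝ :=
  if hg : (gDS v x).PosSemidef then
    (hg.1.eigenvectorUnitary.1 * Matrix.diagonal (fun i => Real.sqrt (hg.1.eigenvalues i)) *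
      (star hg.1.eigenvectorUnitary : Matrix (Fin n) (Fin n) ℝ))⁻¹ * hDS v x *
    (hg.1.eigenvectorUnitary.1 * Matrix.diagonal (fun i => Real.sqrt (hg.1.eigenvalues i)) *
      (star hg.1.eigenvectorUnitary : Matrix (Fin n) (Fin n) ℝ))⁻¹ else 0

/-- The normalized `k`-th elementary symmetric function `H_k = e_k / C(n,k)`. -/
def Hk (n k : ℕ) (l : Fin n → ℝ) : ℝ :=
  (∑ s ∈ Finset.powersetCard k (Finset.univ : Finset (Fin n)), ∏ i ∈ s, l i) / (n.choose k)

end DeSitter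
end


section AuxStmt19

open Matrix

lemma aux_PP (m : ℕ) (p : Fin m → ℝ) :
    (Matrix.of fun i j => p i * p j) * (Matrix.of fun i j => p i * p j)
      = (∑ i, p i ^ 2) • (Matrix.of fun i j => p i * p j) := by
  ext i j
  simp only [Matrix.mul_apply, Matrix.smul_apply, Matrix.of_apply, smul_eq_mul]
  rw [Finset.sum_congr rfl (fun k _ =>
    show p i * p k * (p k * p j) = p k ^ 2 * (p i * p j) by ring), ← Finset.sum_mul]

lemma aux_gamma (m : ℕ) (p : Fin m → ℝ) :
    ((1 : Matrix (Fin m) (Fin m) ℝ) -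
        (Real.sqrt (1 + ∑ i, p i ^ 2) * (1 + Real.sqrt (1 + ∑ i, p i ^ 2)))⁻¹ •
          Matrix.of (fun i j => p i * p j)) *
        (1 + Matrix.of (fun i j => p i * p j)) *
        (1 - (Real.sqrt (1 + ∑ i, p i ^ 2) * (1 + Real.sqrt (1 + ∑ i, p i ^ 2)))⁻¹ •
          Matrix.of (fun i j => p i * p j)) = 1 := by
  set s : ℝ := ∑ i, p i ^ 2 with hs
  have hs0 : 0 ≤ s := Finset.sum_nonneg fun i _ => sq_nonneg _
  set w : ℝ := Real.sqrt (1 + s) with hwdef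
  have hwnn : 0 ≤ w := Real.sqrt_nonneg _
  have hw2 : w ^ 2 = 1 + s := Real.sq_sqrt (by linarith)
  have hw1 : 1 ≤ w := by nlinarith
  have hw0 : (0:ℝ) < w := by linarith
  set c : ℝ := (w * (1 + w))⁻¹ with hc
  set P : Matrix (Fin m) (Fin m) ℝ := Matrix.of (fun i j => p i * p j) with hP
  have hPP : P * P = s • P := aux_PP m p
  have expand : (1 - c • P) * (1 + P) * (1 - c • P)
      = 1 + ((1 - c - c * s) * (1 - c * s) - c) • P := by
    simp only [sub_mul, mul_sub, add_mul, mul_add, one_mul, mul_one, Matrix.smul_mul,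
      Matrix.mul_smul, hPP, smul_smul]
    module
  have hcoef : (1 - c - c * s) * (1 - c * s) - c = 0 := by
    have hseq : s = w ^ 2 - 1 := by linarith
    have h1w : (0:ℝ) < 1 + w := by linarith
    rw [hc, hseq]
    field_simp
    ring
  rw [expand, hcoef, zero_smul, add_zero]

lemma aux_posDef_smul {m : ℕ} {c : ℝ} (hc : 0 < c) {A : Matrix (Fin m) (Fin m) ℝ}
    (hA : A.PosDef) : (c • A).PosDef := by
  refine Matrix.PosDef.of_dotProduct_mulVec_pos ?_ (fun x hx => ?_)
  · unfold Matrix.IsHermitian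
    rw [conjTranspose_smul, hA.1.eq]
    simp
  · have := hA.dotProduct_mulVec_pos hx
    simpa [Matrix.smul_mulVec, dotProduct_smul, smul_eq_mul] using
      mul_pos hc this

lemma aux_posDef_smul_iff {m : ℕ} {c : ℝ} (hc : 0 < c) {A : Matrix (Fin m) (Fin m) ℝ} :
    (c • A).PosDef ↔ A.PosDef := by
  constructor
  · intro h
    have := aux_posDef_smul (inv_pos.mpr hc) h
    rwa [smul_smul, inv_mul_cancel₀ hc.ne', one_smul] at this
  · exact aux_posDef_smul hc

lemma aux_posDef_conj {m : ℕ} {A C : Matrix (Fin m) (Fin m) ℝ}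
    (hA : A.PosDef) (hC : IsUnit C) : (Cᵀ * A * C).PosDef := by
  refine Matrix.PosDef.of_dotProduct_mulVec_pos ?_ (fun x hx => ?_)
  · have := Matrix.isHermitian_conjTranspose_mul_mul C hA.1
    simpa [Matrix.conjTranspose_eq_transpose_of_trivial] using this
  · have hCx : C *ᵥ x ≠ 0 := by
      intro h
      exact hx (by simpa [Matrix.mulVec_zero] using
        (Matrix.mulVec_injective_iff_isUnit.mpr hC) (h.trans (Matrix.mulVec_zero C).symm))
    have h2 := hA.dotProduct_mulVec_pos hCx
    have key : star x ⬝ᵥ (Cᵀ * A * C) *ᵥ x = star (C *ᵥ x) ⬝ᵥ A *ᵥ (C *ᵥ x) := by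
      rw [← Matrix.mulVec_mulVec, ← Matrix.mulVec_mulVec]
      rw [Matrix.dotProduct_mulVec, star_trivial, star_trivial, Matrix.vecMul_transpose]
    rw [key]
    exact h2

variable {n : ℕ}

lemma aux_phi_deriv (u : En n → ℝ) (y : En n) (hdu : DifferentiableAt ℝ u y) :
    HasFDerivAt (fun z => u z ^ 2 + ∑ k, z k ^ 2)
      ((2 * u y) • fderiv ℝ u y + ∑ k, (2 * y k) • (EuclideanSpace.proj k : En n →L[ℝ] ℝ)) y := by
  have h1 : HasFDerivAt (fun z => u z ^ 2) ((2 * u y) • fderiv ℝ u y) y := by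
    have := hdu.hasFDerivAt.mul hdu.hasFDerivAt
    simp only [pow_two]
    rw [two_mul, add_smul]
    exact this
  have h2 : HasFDerivAt (fun z : En n => ∑ k, z k ^ 2)
      (∑ k, (2 * y k) • (EuclideanSpace.proj k : En n →L[ℝ] ℝ)) y := by
    refine HasFDerivAt.fun_sum fun k _ => ?_
    have hk := ((EuclideanSpace.proj k : En n →L[ℝ] ℝ).hasFDerivAt (x := y)).fun_mul
      ((EuclideanSpace.proj k : En n →L[ℝ] ℝ).hasFDerivAt (x := y))
    have : (fun z : En n => (EuclideanSpace.proj k : En n →L[ℝ] ℝ) z *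
        (EuclideanSpace.proj k : En n →L[ℝ] ℝ) z) = fun z : En n => z k ^ 2 := by
      funext z; simp [pow_two]
    rw [this] at hk
    have : (EuclideanSpace.proj k : En n →L[ℝ] ℝ) y = y k := rfl
    rw [this] at hk
    rw [two_mul, add_smul]
    exact hk
  exact h1.add h2

lemma aux_hess (Ω : Set (En n)) (hΩ : IsOpen Ω) (u : En n → ℝ)
    (hu : ContDiffOn ℝ 2 u Ω) (x : En n) (hx : x ∈ Ω) (i j : Fin n) :
    Dh (fun y => u y ^ 2 + ∑ k, y k ^ 2) x i j
      = 2 * (Dg u x i * Dg u x j + u x * Dh u x i j) + (if i = j then 2 else 0) := by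
  have hmem : Ω ∈ nhds x := hΩ.mem_nhds hx
  have hcd : ContDiffAt ℝ 2 u x := hu.contDiffAt hmem
  have hdux : DifferentiableAt ℝ u x := hcd.differentiableAt (by norm_num)
  have heq : (fun y => fderiv ℝ (fun z => u z ^ 2 + ∑ k, z k ^ 2) y (EuclideanSpace.single j 1))
      =ᶠ[nhds x] (fun y => 2 * u y * fderiv ℝ u y (EuclideanSpace.single j 1) + 2 * y j) := by
    filter_upwards [hmem] with y hy
    have hduy : DifferentiableAt ℝ u y :=
      (hu.contDiffAt (hΩ.mem_nhds hy)).differentiableAt (by norm_num)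
    rw [(aux_phi_deriv u y hduy).fderiv]
    simp only [ContinuousLinearMap.add_apply, ContinuousLinearMap.coe_sum',
      Finset.sum_apply, ContinuousLinearMap.coe_smul', Pi.smul_apply, smul_eq_mul]
    have hproj : ∀ k : Fin n, (EuclideanSpace.proj k : En n →L[ℝ] ℝ)
        (EuclideanSpace.single j 1) = if k = j then 1 else 0 := by
      intro k
      have : (EuclideanSpace.proj k : En n →L[ℝ] ℝ) (EuclideanSpace.single j 1)
          = (EuclideanSpace.single j (1:ℝ)) k := rfl
      rw [this, EuclideanSpace.single_apply]
    simp only [hproj, mul_ite, mul_one, mul_zero, Finset.sum_ite_eq', Finset.mem_univ, if_true]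
  have hf' : ContDiffAt ℝ 1 (fderiv ℝ u) x := hcd.fderiv_right (by norm_num)
  have hg : DifferentiableAt ℝ (fun y => fderiv ℝ u y (EuclideanSpace.single j 1)) x :=
    hf'.differentiableAt one_ne_zero |>.clm_apply (differentiableAt_const _)
  have H1 : HasFDerivAt (fun y => 2 * u y) ((2:ℝ) • fderiv ℝ u x) x :=
    hdux.hasFDerivAt.const_mul 2
  have H2 := H1.fun_mul hg.hasFDerivAt
  have H3 : HasFDerivAt (fun y : En n => 2 * y j)
      ((2:ℝ) • (EuclideanSpace.proj j : En n →L[ℝ] ℝ)) x :=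
    ((EuclideanSpace.proj j : En n →L[ℝ] ℝ).hasFDerivAt (x := x)).const_mul 2
  have H := H2.fun_add H3
  have hD : Dh (fun y => u y ^ 2 + ∑ k, y k ^ 2) x i j
      = fderiv ℝ (fun y => 2 * u y * fderiv ℝ u y (EuclideanSpace.single j 1) + 2 * y j) x
          (EuclideanSpace.single i 1) := by
    show fderiv ℝ (fun y => fderiv ℝ (fun z => u z ^ 2 + ∑ k, z k ^ 2) y
        (EuclideanSpace.single j 1)) x (EuclideanSpace.single i 1) = _
    rw [heq.fderiv_eq]
  rw [hD, H.fderiv]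
  simp only [ContinuousLinearMap.add_apply, ContinuousLinearMap.smul_apply, smul_eq_mul]
  have hproj : (EuclideanSpace.proj j : En n →L[ℝ] ℝ) (EuclideanSpace.single i 1)
      = if i = j then 1 else 0 := by
    have : (EuclideanSpace.proj j : En n →L[ℝ] ℝ) (EuclideanSpace.single i 1)
        = (EuclideanSpace.single i (1:ℝ)) j := rfl
    rw [this, EuclideanSpace.single_apply]
    simp [eq_comm]
  rw [hproj]
  show 2 * u x * Dh u x i j + Dg u x j * (2 * Dg u x i) + 2 * _ = _
  by_cases h : i = j <;> simp [h] <;> ring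

end AuxStmt19

/-- `γ = I − p pᵀ/(w(1+w))` is the inverse square root of `I + p pᵀ`; consequently `A[u]` is
positive definite exactly when `I + Du Duᵀ + u D²u` — one half the Hessian of `u² + |x|²` —
is positive definite, i.e. the graph of `u` is locally strictly convex in `ℍⁿ⁺¹` exactly when
`u² + |x|²` is strictly convex. -/
theorem stmt_19 (n : ℕ) (hn : 1 ≤ n) (p : Fin n → ℝ) :
    ((1 - (Real.sqrt (1 + ∑ i, p i ^ 2) * (1 + Real.sqrt (1 + ∑ i, p i ^ 2)))⁻¹ •
          Matrix.of (fun i j => p i * p j) : Matrix (Fin n) (Fin n) ℝ) *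
        (1 + Matrix.of (fun i j => p i * p j)) *
        (1 - (Real.sqrt (1 + ∑ i, p i ^ 2) * (1 + Real.sqrt (1 + ∑ i, p i ^ 2)))⁻¹ •
          Matrix.of (fun i j => p i * p j)) = 1) ∧
    ∀ (Ω : Set (En n)), IsOpen Ω → ∀ u : En n → ℝ, ContDiffOn ℝ 2 u Ω →
      (∀ x ∈ Ω, 0 < u x) → ∀ x ∈ Ω,
        (Matrix.of (fun i j => (if i = j then (1 : ℝ) else 0)
            + Dg u x i * Dg u x j + u x * Dh u x i j)
          = (2 : ℝ)⁻¹ • Dh (fun y => u y ^ 2 + ∑ i, y i ^ 2) x) ∧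
        ((hypA u x).PosDef ↔
          (Matrix.of (fun i j => (if i = j then (1 : ℝ) else 0)
            + Dg u x i * Dg u x j + u x * Dh u x i j)).PosDef) := by
  constructor
  · exact aux_gamma n p
  · intro Ω hΩ u hu hupos x hx
    have hh : ∀ i j, ((2 : ℝ)⁻¹ • Dh (fun y => u y ^ 2 + ∑ i, y i ^ 2) x) i j
        = (if i = j then (1 : ℝ) else 0) + Dg u x i * Dg u x j + u x * Dh u x i j := by
      intro i j
      have := aux_hess Ω hΩ u hu x hx i j
      simp only [Matrix.smul_apply, smul_eq_mul, this]
      by_cases h : i = j <;> simp [h] <;> ring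
    constructor
    · ext i j
      rw [hh i j]
      rfl
    · -- positive definiteness equivalence
      set q : Fin n → ℝ := Dg u x with hq
      set P : Matrix (Fin n) (Fin n) ℝ := Matrix.of (fun i j => q i * q j) with hP
      set w : ℝ := wG u x with hwdef
      set c : ℝ := (w * (1 + w))⁻¹ with hc
      set B : Matrix (Fin n) (Fin n) ℝ := Dh u x with hB
      set γ : Matrix (Fin n) (Fin n) ℝ := gammaM u x with hγ
      have hγdef : γ = 1 - c • P := rfl
      have hginv : γ * (1 + P) * γ = 1 := aux_gamma n q
      have hw0 : (0:ℝ) < w := by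
        rw [hwdef]
        apply Real.sqrt_pos.mpr
        have : (0:ℝ) ≤ ∑ i, Dg u x i ^ 2 := Finset.sum_nonneg fun i _ => sq_nonneg _
        linarith
      set M : Matrix (Fin n) (Fin n) ℝ := Matrix.of (fun i j => (if i = j then (1 : ℝ) else 0)
          + Dg u x i * Dg u x j + u x * Dh u x i j) with hM
      have hMeq : M = 1 + P + u x • B := by
        ext i j
        simp [hM, hP, hB, hq, Matrix.one_apply, Matrix.add_apply, Matrix.smul_apply]
      have hA : hypA u x = w⁻¹ • (γ * M * γ) := by
        rw [hypA, hMeq]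
        congr 1
        rw [mul_add, add_mul, hginv, Matrix.mul_smul, Matrix.smul_mul]
      have hγu : IsUnit γ := (Matrix.isUnit_iff_isUnit_det γ).mpr (Matrix.isUnit_det_of_right_inverse (B := (1 + P) * γ)
        (by rw [← mul_assoc, hginv]))
      have hγsym : Matrix.transpose γ = γ := by
        rw [hγdef]
        rw [Matrix.transpose_sub, Matrix.transpose_one, Matrix.transpose_smul]
        congr 2
        ext i j
        simp [hP, mul_comm]
      rw [hA, aux_posDef_smul_iff (inv_pos.mpr hw0)]
      constructor
      · intro h
        have hγd : IsUnit γ.det := (Matrix.isUnit_iff_isUnit_det γ).mp hγu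
        have hγiu : IsUnit γ⁻¹ := (Matrix.isUnit_nonsing_inv_iff).mpr hγu
        have := aux_posDef_conj h hγiu
        have hrw : Matrix.transpose γ⁻¹ * (γ * M * γ) * γ⁻¹ = M := by
          rw [Matrix.transpose_nonsing_inv, hγsym]
          calc γ⁻¹ * (γ * M * γ) * γ⁻¹
              = (γ⁻¹ * γ) * M * (γ * γ⁻¹) := by noncomm_ring
            _ = M := by rw [Matrix.nonsing_inv_mul γ hγd, Matrix.mul_nonsing_inv γ hγd,
                  one_mul, mul_one]
        rwa [hrw] at this
      · intro h
        have := aux_posDef_conj h hγu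
        rwa [hγsym] at this
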